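/- arXiv:0901.3290 — 3 statements merged into one kernel-verified Lean document; each statement's English description precedes it below -/
import Mathlib

section
/- Let p ≥ 2 and let ⟨A,B⟩ be a positive-definite inner product on the space of p×p real symmetric matrices. Suppose there exists σ² > 0 such that ⟨A,B⟩ = tr(AB)/σ² for all symmetric A, B with tr(A) = 0. Then there exists τ < 1/p such that ⟨A,B⟩ = [tr(AB) − τ·tr(A)·tr(B)]/σ² for all symmetric A, B. -/
open Matrix

/-- An inner product on the space of p×p real symmetric matrices that
agrees with `tr(AB)/σ²` on trace-free symmetric matrices must be of the orthogonally
invariant form `(tr(AB) − τ tr(A) tr(B))/σ²` for some `τ < 1/p`. -/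
theorem stmt_0 (p : ℕ) (hp : 2 ≤ p)
    (f : Matrix (Fin p) (Fin p) ℝ → Matrix (Fin p) (Fin p) ℝ → ℝ)
    (hsymm : ∀ A B, A.IsSymm → B.IsSymm → f A B = f B A)
    (hadd : ∀ A A' B, A.IsSymm → A'.IsSymm → B.IsSymm → f (A + A') B = f A B + f A' B)
    (hsmul : ∀ (c : ℝ) A B, A.IsSymm → B.IsSymm → f (c • A) B = c * f A B)
    (hpos : ∀ A, A.IsSymm → A ≠ 0 → 0 < f A A)
    (σ2 : ℝ) (hσ : 0 < σ2)
    (htr : ∀ A B, A.IsSymm → B.IsSymm → A.trace = 0 → f A B = (A * B).trace / σ2) :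
    ∃ τ : ℝ, τ < 1 / p ∧ ∀ A B, A.IsSymm → B.IsSymm →
      f A B = ((A * B).trace - τ * A.trace * B.trace) / σ2 := by
  have hp0 : (p : ℝ) ≠ 0 := Nat.cast_ne_zero.2 (by omega)
  have hppos : (0:ℝ) < p := by positivity
  have hone : (1 : Matrix (Fin p) (Fin p) ℝ).IsSymm := Matrix.isSymm_one
  have h1ne : (1 : Matrix (Fin p) (Fin p) ℝ) ≠ 0 := by
    intro h
    have := congrFun (congrFun h ⟨0, by omega⟩) ⟨0, by omega⟩
    simp [Matrix.one_apply] at this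
  set c := f 1 1 with hc
  have hcpos : 0 < c := hpos 1 hone h1ne
  -- key decomposition lemma
  have hsymmsub : ∀ (M : Matrix (Fin p) (Fin p) ℝ) (t : ℝ), M.IsSymm →
      (M - t • 1).IsSymm := by
    intro M t hM
    unfold Matrix.IsSymm at *
    simp [Matrix.transpose_sub, Matrix.transpose_smul, hM]
  have htr0 : ∀ (M : Matrix (Fin p) (Fin p) ℝ), (M - (M.trace / p) • 1).trace = 0 := by
    intro M
    simp [Matrix.trace_sub, Matrix.trace_smul, Matrix.trace_one]
    field_simp
    ring
  have hdecomp : ∀ M N : Matrix (Fin p) (Fin p) ℝ, M.IsSymm → N.IsSymm →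
      f M N = ((M - (M.trace / p) • 1) * N).trace / σ2 + (M.trace / p) * f 1 N := by
    intro M N hM hN
    have h1 : f M N = f (M - (M.trace / p) • 1) N + f ((M.trace / p) • 1) N := by
      have := hadd (M - (M.trace / p) • 1) ((M.trace / p) • 1) N
        (hsymmsub M _ hM) (hone.smul _) hN
      rwa [sub_add_cancel] at this
    rw [h1, htr _ _ (hsymmsub M _ hM) hN (htr0 M), hsmul _ _ _ hone hN]
  have hf1 : ∀ N : Matrix (Fin p) (Fin p) ℝ, N.IsSymm →
      f 1 N = (N.trace / p) * c := by
    intro N hN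
    rw [hsymm 1 N hone hN, hdecomp N 1 hN hone]
    have : ((N - (N.trace / p) • 1) * 1).trace = 0 := by
      rw [mul_one]; exact htr0 N
    rw [this]
    simp
    exact Or.inl hc.symm
  refine ⟨1 / p - c * σ2 / p ^ 2, ?_, ?_⟩
  · have : 0 < c * σ2 / p ^ 2 := by positivity
    linarith
  intro A B hA hB
  rw [hdecomp A B hA hB, hf1 B hB]
  have htrm : ((A - (A.trace / p) • 1) * B).trace
      = (A * B).trace - (A.trace / p) * B.trace := by
    simp [sub_mul, Matrix.smul_mul, Matrix.trace_sub, Matrix.trace_smul]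
  rw [htrm]
  field_simp
  ring
end

section
/- Let Ȳ_1, Ȳ_2, M_1, M_2 be elements of a real inner product space with norm ‖·‖, n_1, n_2 > 0, n = n_1 + n_2, avg(X) = (n_1 X_1 + n_2 X_2)/n, Δ(X) = X_1 − X_2. Then n_1‖Ȳ_1 − M_1‖² + n_2‖Ȳ_2 − M_2‖² = n‖avg(Ȳ) − avg(M)‖² + (n_1 n_2/n)‖Δ(Ȳ) − Δ(M)‖², where avg and Δ are applied to the pairs (Ȳ_1,Ȳ_2) and (M_1,M_2). -/
/-- two-sample squared-norm decomposition
n₁‖Ȳ₁−M₁‖² + n₂‖Ȳ₂−M₂‖² = n‖avg Ȳ − avg M‖² + (n₁n₂/n)‖ΔȲ − ΔM‖². -/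
theorem stmt_15 {E : Type*} [NormedAddCommGroup E] [InnerProductSpace ℝ E]
    (n1 n2 : ℝ) (hn1 : 0 < n1) (hn2 : 0 < n2)
    (Y1 Y2 M1 M2 : E) :
    n1 * ‖Y1 - M1‖ ^ 2 + n2 * ‖Y2 - M2‖ ^ 2
      = (n1 + n2) * ‖(n1 + n2)⁻¹ • (n1 • Y1 + n2 • Y2)
            - (n1 + n2)⁻¹ • (n1 • M1 + n2 • M2)‖ ^ 2
        + (n1 * n2 / (n1 + n2)) * ‖(Y1 - Y2) - (M1 - M2)‖ ^ 2 := by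
  have hn : (0:ℝ) < n1 + n2 := by linarith
  have key : ∀ x : E, ‖x‖ ^ 2 = inner ℝ x x := fun x =>
    (real_inner_self_eq_norm_sq x).symm
  simp only [key, inner_sub_sub_self, inner_smul_left, inner_smul_right,
    inner_add_add_self, inner_sub_left, inner_sub_right, inner_add_left,
    inner_add_right, RCLike.conj_to_real]
  have h12 : (inner ℝ Y1 Y2 : ℝ) = inner ℝ Y2 Y1 := real_inner_comm _ _
  have hM : (inner ℝ M1 M2 : ℝ) = inner ℝ M2 M1 := real_inner_comm _ _
  have hYM : (inner ℝ Y1 M2 : ℝ) = inner ℝ M2 Y1 := real_inner_comm _ _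
  have hMY : (inner ℝ M1 Y2 : ℝ) = inner ℝ Y2 M1 := real_inner_comm _ _
  have h1 : (inner ℝ Y1 M1 : ℝ) = inner ℝ M1 Y1 := real_inner_comm _ _
  have h2 : (inner ℝ Y2 M2 : ℝ) = inner ℝ M2 Y2 := real_inner_comm _ _
  field_simp
  ring_nf
end

section
/- Let S be a p×p real symmetric matrix with eigenvalues λ_1 ≥ … ≥ λ_p and let the block average blk(λ) replace each λ_i in block j (of size m_j, blocks consecutive) by the average of the λ's in that block. Then tr((S − V·diag(blk(λ))·Vᵀ)²) = Σ_{i=1}^p (λ_i − blk(λ)_i)² for any orthogonal V with S = V·diag(λ)·Vᵀ, and this value equals the minimum of tr((S − M)²) over all symmetric M having exactly k distinct eigenvalues with multiplicities m_1, …, m_k arranged in decreasing order. -/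
open Matrix Finset



lemma aux_conj_mul_conj {p : ℕ} (V : Matrix (Fin p) (Fin p) ℝ)
    (hV : Vᵀ * V = 1) (a c : Fin p → ℝ) :
    (V * Matrix.diagonal a * Vᵀ) * (V * Matrix.diagonal c * Vᵀ)
      = V * Matrix.diagonal (fun i => a i * c i) * Vᵀ := by
  rw [← Matrix.diagonal_mul_diagonal]
  calc (V * Matrix.diagonal a * Vᵀ) * (V * Matrix.diagonal c * Vᵀ)
      = V * Matrix.diagonal a * ((Vᵀ * V) * (Matrix.diagonal c * Vᵀ)) := by
        simp only [Matrix.mul_assoc]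
    _ = V * (Matrix.diagonal a * Matrix.diagonal c) * Vᵀ := by
        rw [hV, Matrix.one_mul]; simp only [Matrix.mul_assoc]

lemma aux_trace_conj {p : ℕ} (V : Matrix (Fin p) (Fin p) ℝ)
    (hV : Vᵀ * V = 1) (a c : Fin p → ℝ) :
    ((V * Matrix.diagonal a * Vᵀ) * (V * Matrix.diagonal c * Vᵀ)).trace
      = ∑ i, a i * c i := by
  rw [aux_conj_mul_conj V hV, Matrix.trace_mul_comm,
    ← Matrix.mul_assoc, hV, Matrix.one_mul, Matrix.trace_diagonal]

lemma aux_sub_conj {p : ℕ} (V : Matrix (Fin p) (Fin p) ℝ) (a c : Fin p → ℝ) :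
    V * Matrix.diagonal a * Vᵀ - V * Matrix.diagonal c * Vᵀ
      = V * Matrix.diagonal (fun i => a i - c i) * Vᵀ := by
  have : Matrix.diagonal (fun i => a i - c i)
      = Matrix.diagonal a - Matrix.diagonal c := by
    rw [Matrix.diagonal_sub]
  rw [this, Matrix.mul_sub, Matrix.sub_mul]

lemma aux_ds_bound {p : ℕ} (lam mu : Fin p → ℝ) (hlam : Antitone lam) (hmu : Antitone mu)
    (Q : Matrix (Fin p) (Fin p) ℝ) (hQ : Q ∈ doublyStochastic ℝ (Fin p)) :
    ∑ i, ∑ j, Q i j * (lam i * mu j) ≤ ∑ i, lam i * mu i := by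
  obtain ⟨w, hw0, hw1, hwQ⟩ := exists_eq_sum_perm_of_mem_doublyStochastic hQ
  have hmono : Monovary lam mu := by
    intro i j hij
    have hji : j ≤ i := by
      by_contra h
      exact absurd (hmu (le_of_not_ge h)) (not_le.mpr hij)
    exact hlam hji
  have hQapp : ∀ i j, Q i j = ∑ σ : Equiv.Perm (Fin p), w σ * (σ.permMatrix ℝ) i j := by
    intro i j; rw [← hwQ]; simp only [Matrix.sum_apply, Matrix.smul_apply, smul_eq_mul]
  have hperm : ∀ σ : Equiv.Perm (Fin p), ∀ i,
      ∑ j, w σ * (σ.permMatrix ℝ) i j * (lam i * mu j) = w σ * (lam i * mu (σ i)) := by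
    intro σ i
    simp [Equiv.Perm.permMatrix, PEquiv.toMatrix_apply, Equiv.toPEquiv_apply,
      Option.mem_def, eq_comm, mul_ite, ite_mul]
  calc ∑ i, ∑ j, Q i j * (lam i * mu j)
      = ∑ i, ∑ j, ∑ σ : Equiv.Perm (Fin p), w σ * (σ.permMatrix ℝ) i j * (lam i * mu j) := by
        refine Finset.sum_congr rfl fun i _ => Finset.sum_congr rfl fun j _ => ?_
        rw [hQapp i j, Finset.sum_mul]
    _ = ∑ i, ∑ σ : Equiv.Perm (Fin p), ∑ j, w σ * (σ.permMatrix ℝ) i j * (lam i * mu j) := by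
        exact Finset.sum_congr rfl fun i _ => Finset.sum_comm
    _ = ∑ σ : Equiv.Perm (Fin p), ∑ i, ∑ j, w σ * (σ.permMatrix ℝ) i j * (lam i * mu j) :=
        Finset.sum_comm
    _ = ∑ σ : Equiv.Perm (Fin p), w σ * ∑ i, lam i * mu (σ i) := by
        refine Finset.sum_congr rfl fun σ _ => ?_
        rw [Finset.mul_sum]
        exact Finset.sum_congr rfl fun i _ => hperm σ i
    _ ≤ ∑ σ : Equiv.Perm (Fin p), w σ * ∑ i, lam i * mu i := by
        refine Finset.sum_le_sum fun σ _ => mul_le_mul_of_nonneg_left ?_ (hw0 σ)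
        exact hmono.sum_mul_comp_perm_le_sum_mul
    _ = ∑ i, lam i * mu i := by rw [← Finset.sum_mul, hw1, one_mul]

lemma aux_trace_double {p : ℕ} (V U : Matrix (Fin p) (Fin p) ℝ)
    (lam mu : Fin p → ℝ) :
    ((V * Matrix.diagonal lam * Vᵀ) * (U * Matrix.diagonal mu * Uᵀ)).trace
      = ∑ i, ∑ j, ((Vᵀ * U) i j)^2 * (lam i * mu j) := by
  have h1 : ((V * Matrix.diagonal lam * Vᵀ) * (U * Matrix.diagonal mu * Uᵀ)).trace
      = ((Matrix.diagonal lam * (Vᵀ * U)) * (Matrix.diagonal mu * (Vᵀ * U)ᵀ)).trace := by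
    rw [show (V * Matrix.diagonal lam * Vᵀ) * (U * Matrix.diagonal mu * Uᵀ)
        = V * (Matrix.diagonal lam * (Vᵀ * (U * (Matrix.diagonal mu * Uᵀ)))) by
      simp only [Matrix.mul_assoc]]
    rw [Matrix.trace_mul_comm, Matrix.transpose_mul, Matrix.transpose_transpose]
    congr 1
    simp only [Matrix.mul_assoc]
  rw [h1]
  simp only [Matrix.trace, Matrix.diag, Matrix.mul_apply, Matrix.diagonal_apply,
    Matrix.transpose_apply, ite_mul, zero_mul, Finset.sum_ite_eq, Finset.mem_univ, if_true]
  refine Finset.sum_congr rfl fun i _ => Finset.sum_congr rfl fun j _ => by ring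

lemma aux_vonNeumann {p : ℕ} (V U : Matrix (Fin p) (Fin p) ℝ)
    (hV : Vᵀ * V = 1) (hV' : V * Vᵀ = 1) (hU : Uᵀ * U = 1) (hU' : U * Uᵀ = 1)
    (lam mu : Fin p → ℝ) (hlam : Antitone lam) (hmu : Antitone mu)
    (hds : ∀ (Q : Matrix (Fin p) (Fin p) ℝ), Q ∈ doublyStochastic ℝ (Fin p) →
      ∑ i, ∑ j, Q i j * (lam i * mu j) ≤ ∑ i, lam i * mu i)
    (htd : ((V * Matrix.diagonal lam * Vᵀ) * (U * Matrix.diagonal mu * Uᵀ)).trace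
      = ∑ i, ∑ j, ((Vᵀ * U) i j)^2 * (lam i * mu j)) :
    ((V * Matrix.diagonal lam * Vᵀ) * (U * Matrix.diagonal mu * Uᵀ)).trace
      ≤ ∑ i, lam i * mu i := by
  set W := Vᵀ * U with hW
  have hWWt : W * Wᵀ = 1 := by
    rw [hW, Matrix.transpose_mul, Matrix.transpose_transpose]
    calc Vᵀ * U * (Uᵀ * V) = Vᵀ * (U * Uᵀ) * V := by simp only [Matrix.mul_assoc]
      _ = 1 := by rw [hU', Matrix.mul_one, hV]
  have hWtW : Wᵀ * W = 1 := by
    rw [hW, Matrix.transpose_mul, Matrix.transpose_transpose]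
    calc Uᵀ * V * (Vᵀ * U) = Uᵀ * (V * Vᵀ) * U := by simp only [Matrix.mul_assoc]
      _ = 1 := by rw [hV', Matrix.mul_one, hU]
  have hQ : (Matrix.of fun i j => (W i j)^2) ∈ doublyStochastic ℝ (Fin p) := by
    rw [mem_doublyStochastic_iff_sum]
    refine ⟨fun i j => sq_nonneg _, fun i => ?_, fun j => ?_⟩
    · have := congrArg (fun M => M i i) hWWt
      simp only [Matrix.mul_apply, Matrix.one_apply_eq] at this
      simpa [pow_two, Matrix.transpose_apply] using this
    · have := congrArg (fun M => M j j) hWtW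
      simp only [Matrix.mul_apply, Matrix.one_apply_eq] at this
      simpa [pow_two, Matrix.transpose_apply] using this
  rw [htd]
  exact hds _ hQ

lemma aux_mean_le {p : ℕ} (F : Finset (Fin p)) (hF : F.Nonempty) (f : Fin p → ℝ) (c : ℝ) :
    ∑ i ∈ F, (f i - (∑ i ∈ F, f i) / F.card)^2 ≤ ∑ i ∈ F, (f i - c)^2 := by
  set n : ℝ := (F.card : ℝ) with hn
  have hn0 : 0 < n := by
    simp only [hn, Nat.cast_pos, Finset.card_pos]; exact hF
  set a : ℝ := (∑ i ∈ F, f i) / n with ha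
  have hT : ∑ i ∈ F, f i = n * a := by
    rw [ha]; field_simp
  have key : ∑ i ∈ F, (f i - c)^2
      = ∑ i ∈ F, (f i - a)^2 + n * (a - c)^2 := by
    have expand : ∀ i, (f i - c)^2 = (f i - a)^2 + ((a - c) * (2 * f i) - (a - c) * (a + c)) := by
      intro i; ring
    rw [Finset.sum_congr rfl fun i _ => expand i, Finset.sum_add_distrib,
      Finset.sum_sub_distrib, ← Finset.mul_sum, ← Finset.mul_sum, Finset.sum_const,
      nsmul_eq_mul, ← hn, hT]
    ring
  rw [key]
  nlinarith [sq_nonneg (a - c), hn0]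

lemma aux_blockLS {p k : ℕ} (b : Fin p → Fin k) (hbsurj : Function.Surjective b)
    (lam : Fin p → ℝ) (d : Fin k → ℝ) :
    ∑ i, (lam i - (∑ j ∈ univ.filter (fun j => b j = b i), lam j)
        / (univ.filter (fun j => b j = b i)).card)^2
      ≤ ∑ i, (lam i - d (b i))^2 := by
  rw [← Finset.sum_fiberwise univ b
    (fun i => (lam i - (∑ j ∈ univ.filter (fun j => b j = b i), lam j)
        / (univ.filter (fun j => b j = b i)).card)^2),
    ← Finset.sum_fiberwise univ b (fun i => (lam i - d (b i))^2)]
  refine Finset.sum_le_sum fun j _ => ?_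
  have hne : (univ.filter (fun i => b i = j)).Nonempty := by
    obtain ⟨i, hi⟩ := hbsurj j
    exact ⟨i, by simp [hi]⟩
  calc ∑ i ∈ univ.filter (fun i => b i = j),
        (lam i - (∑ j' ∈ univ.filter (fun j' => b j' = b i), lam j')
          / (univ.filter (fun j' => b j' = b i)).card)^2
      = ∑ i ∈ univ.filter (fun i => b i = j),
        (lam i - (∑ j' ∈ univ.filter (fun j' => b j' = j), lam j')
          / (univ.filter (fun j' => b j' = j)).card)^2 := by
        refine Finset.sum_congr rfl fun i hi => ?_
        rw [(Finset.mem_filter.1 hi).2]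
    _ ≤ ∑ i ∈ univ.filter (fun i => b i = j), (lam i - d j)^2 :=
        aux_mean_le _ hne lam (d j)
    _ = ∑ i ∈ univ.filter (fun i => b i = j), (lam i - d (b i))^2 := by
        refine Finset.sum_congr rfl fun i hi => ?_
        rw [(Finset.mem_filter.1 hi).2]

lemma aux_avg_antitone {p k : ℕ} (b : Fin p → Fin k) (hb : Monotone b)
    (hbsurj : Function.Surjective b) (lam : Fin p → ℝ) (hlam : Antitone lam) :
    Antitone (fun j : Fin k =>
      (∑ i ∈ univ.filter (fun i => b i = j), lam i)
        / (univ.filter (fun i => b i = j)).card) := by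
  intro j1 j2 hj
  dsimp only
  rcases eq_or_lt_of_le hj with rfl | hjlt
  · exact le_rfl
  set F1 := univ.filter (fun i => b i = j1) with hF1
  set F2 := univ.filter (fun i => b i = j2) with hF2
  have hne1 : F1.Nonempty := by obtain ⟨i, hi⟩ := hbsurj j1; exact ⟨i, by simp [hF1, hi]⟩
  have hne2 : F2.Nonempty := by obtain ⟨i, hi⟩ := hbsurj j2; exact ⟨i, by simp [hF2, hi]⟩
  have hc1 : (0:ℝ) < F1.card := by
    simp only [Nat.cast_pos, Finset.card_pos]; exact hne1
  have hc2 : (0:ℝ) < F2.card := by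
    simp only [Nat.cast_pos, Finset.card_pos]; exact hne2
  rw [div_le_div_iff₀ hc2 hc1]
  have hpt : ∀ i1 ∈ F1, ∀ i2 ∈ F2, lam i2 ≤ lam i1 := by
    intro i1 hi1 i2 hi2
    have hb1 : b i1 = j1 := (Finset.mem_filter.1 hi1).2
    have hb2 : b i2 = j2 := (Finset.mem_filter.1 hi2).2
    have : i1 ≤ i2 := by
      by_contra h
      have := hb (le_of_not_ge h)
      rw [hb1, hb2] at this
      exact absurd hjlt (not_lt.mpr this)
    exact hlam this
  calc (∑ i ∈ F2, lam i) * F1.card = ∑ i1 ∈ F1, ∑ i2 ∈ F2, lam i2 := by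
        rw [Finset.sum_const, nsmul_eq_mul, mul_comm]
    _ ≤ ∑ i1 ∈ F1, ∑ i2 ∈ F2, lam i1 :=
        Finset.sum_le_sum fun i1 hi1 => Finset.sum_le_sum fun i2 hi2 => hpt i1 hi1 i2 hi2
    _ = (∑ i ∈ F1, lam i) * F2.card := by
        simp only [Finset.sum_const, nsmul_eq_mul, ← Finset.sum_mul, mul_comm]

/-- for a symmetric S with decreasing eigenvalues λ and block
structure given by the fibers of a monotone surjection `b : Fin p → Fin k`
(consecutive blocks of sizes m₁,…,m_k), the matrix obtained by replacing the
eigenvalues by their block averages blk(λ) satisfies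
tr((S − V·diag(blk λ)·Vᵀ)²) = Σᵢ (λᵢ − blk(λ)ᵢ)², and this value is the greatest
lower bound (the minimum) of tr((S − M)²) over all symmetric M having exactly k
distinct eigenvalues of multiplicities m₁,…,m_k in decreasing order. -/
theorem stmt_19 (p k : ℕ) (S V : Matrix (Fin p) (Fin p) ℝ)
    (lam : Fin p → ℝ) (hlam : Antitone lam)
    (hV : Vᵀ * V = 1) (hV' : V * Vᵀ = 1)
    (hS : S = V * Matrix.diagonal lam * Vᵀ)
    (b : Fin p → Fin k) (hb : Monotone b) (hbsurj : Function.Surjective b)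
    (blk : Fin p → ℝ)
    (hblk : ∀ i, blk i =
      (∑ j ∈ univ.filter (fun j => b j = b i), lam j)
        / (univ.filter (fun j => b j = b i)).card) :
    (((S - V * Matrix.diagonal blk * Vᵀ) * (S - V * Matrix.diagonal blk * Vᵀ)).trace
        = ∑ i, (lam i - blk i) ^ 2)
    ∧ IsGLB {x : ℝ | ∃ (U : Matrix (Fin p) (Fin p) ℝ) (dt : Fin k → ℝ),
          Uᵀ * U = 1 ∧ U * Uᵀ = 1 ∧ StrictAnti dt ∧
          x = ((S - U * Matrix.diagonal (fun i => dt (b i)) * Uᵀ)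
                * (S - U * Matrix.diagonal (fun i => dt (b i)) * Uᵀ)).trace}
        (∑ i, (lam i - blk i) ^ 2) := by
  have value_eq : ∀ mu : Fin p → ℝ,
      ((S - V * Matrix.diagonal mu * Vᵀ) * (S - V * Matrix.diagonal mu * Vᵀ)).trace
        = ∑ i, (lam i - mu i)^2 := by
    intro mu
    rw [hS, aux_sub_conj, aux_trace_conj V hV]
    exact Finset.sum_congr rfl fun i _ => (sq _).symm
  have hblk_target : ∀ d : Fin k → ℝ,
      ∑ i, (lam i - blk i)^2 ≤ ∑ i, (lam i - d (b i))^2 := by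
    intro d
    have := aux_blockLS b hbsurj lam d
    calc ∑ i, (lam i - blk i)^2
        = ∑ i, (lam i - (∑ j ∈ univ.filter (fun j => b j = b i), lam j)
            / (univ.filter (fun j => b j = b i)).card)^2 :=
          Finset.sum_congr rfl fun i _ => by rw [hblk i]
      _ ≤ _ := this
  refine ⟨value_eq blk, ?_, ?_⟩
  · -- lower bound
    rintro x ⟨U, dt, hU, hU', hdt, rfl⟩
    set mu : Fin p → ℝ := fun i => dt (b i) with hmu_def
    have hmu : Antitone mu := fun i j h => hdt.antitone (hb h)
    set M : Matrix (Fin p) (Fin p) ℝ := U * Matrix.diagonal mu * Uᵀ with hM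
    have hSS : (S * S).trace = ∑ i, lam i * lam i := by
      rw [hS]; exact aux_trace_conj V hV lam lam
    have hMM : (M * M).trace = ∑ i, mu i * mu i := by
      rw [hM]; exact aux_trace_conj U hU mu mu
    have hSM : (S * M).trace ≤ ∑ i, lam i * mu i := by
      rw [hS, hM]
      exact aux_vonNeumann V U hV hV' hU hU' lam mu hlam hmu
        (fun Q hQ => aux_ds_bound lam mu hlam hmu Q hQ)
        (aux_trace_double V U lam mu)
    have hMS : (M * S).trace = (S * M).trace := Matrix.trace_mul_comm M S
    have hexp : ((S - M) * (S - M)).trace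
        = (S * S).trace - (S * M).trace - ((M * S).trace - (M * M).trace) := by
      rw [Matrix.sub_mul, Matrix.mul_sub, Matrix.mul_sub, Matrix.trace_sub,
        Matrix.trace_sub, Matrix.trace_sub]
    have hsum : ∑ i, (lam i - mu i)^2
        = ∑ i, lam i * lam i + ∑ i, mu i * mu i - 2 * ∑ i, lam i * mu i := by
      rw [← Finset.sum_add_distrib, Finset.mul_sum, ← Finset.sum_sub_distrib]
      exact Finset.sum_congr rfl fun i _ => by ring
    have h2 : ∑ i, (lam i - mu i)^2 ≤ ((S - M) * (S - M)).trace := by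
      rw [hexp, hMS, hSS, hMM, hsum]
      linarith
    exact le_trans (hblk_target dt) h2
  · -- greatest lower bound
    intro lb hlb
    set avg : Fin k → ℝ := fun j =>
      (∑ i ∈ univ.filter (fun i => b i = j), lam i)
        / (univ.filter (fun i => b i = j)).card with havg
    have hblkavg : ∀ i, blk i = avg (b i) := fun i => hblk i
    have havganti : Antitone avg := aux_avg_antitone b hb hbsurj lam hlam
    set g : ℝ → ℝ := fun ε => ∑ i, (lam i - blk i - ε * ((k:ℝ) - (b i : ℕ)))^2 with hg
    have hcont : Continuous g := by
      apply continuous_finset_sum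
      intro i _
      exact (continuous_const.sub (continuous_id.mul continuous_const)).pow 2
    have hg0 : g 0 = ∑ i, (lam i - blk i)^2 := by
      simp [hg]
    have hmem : ∀ ε : ℝ, 0 < ε → lb ≤ g ε := by
      intro ε hε
      set dt : Fin k → ℝ := fun j => avg j + ε * ((k:ℝ) - (j:ℕ)) with hdt_def
      have hstrict : StrictAnti dt := by
        intro j1 j2 h
        have h1 : avg j2 ≤ avg j1 := havganti h.le
        have h2 : ε * ((k:ℝ) - (j2:ℕ)) < ε * ((k:ℝ) - (j1:ℕ)) := by
          have : ((j1:ℕ):ℝ) < ((j2:ℕ):ℝ) := Nat.cast_lt.mpr h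
          nlinarith
        exact add_lt_add_of_le_of_lt h1 h2
      refine hlb ⟨V, dt, hV, hV', hstrict, ?_⟩
      rw [value_eq (fun i => dt (b i)), hg]
      exact Finset.sum_congr rfl fun i _ => by rw [hblkavg i]; ring
    have htend : Filter.Tendsto g (nhdsWithin 0 (Set.Ioi 0)) (nhds (g 0)) :=
      (hcont.tendsto 0).mono_left nhdsWithin_le_nhds
    have hev : ∀ᶠ ε in nhdsWithin 0 (Set.Ioi (0:ℝ)), lb ≤ g ε :=
      eventually_mem_nhdsWithin.mono fun ε hε => hmem ε hε
    have := ge_of_tendsto htend hev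
    rwa [hg0] at this
end
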